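/- Suppose in addition that conditions (D3), (D4) and (D5) hold for all s, t ∈ S. Then for each i ∈ {1,2} and all distinct s, t ∈ S: if ⟨α_s, β_t⟩⟨α_t, β_s⟩ = cos²(π/m) for some integer m ≥ 2, then the element ρ_i(s)ρ_i(t) has order exactly m in W_i; and if ⟨α_s, β_t⟩⟨α_t, β_s⟩ ≥ 1, then ρ_i(s)ρ_i(t) has infinite order in W_i. -/

import Mathlib

open Pointwise

/-- The positive linear cone of a subset `A` of a real vector space. -/
def PLC {V : Type*} [AddCommGroup V] [Module ℝ V] (A : Set V) : Set V :=
  { v | ∃ c : V →₀ ℝ, (∀ a, 0 ≤ c a) ∧ ↑c.support ⊆ A ∧ c ≠ 0 ∧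
          v = c.sum fun a t => t • a }

set_option linter.dupNamespace false
set_option linter.unusedVariables false
set_option linter.unreachableTactic false
set_option linter.unusedTactic false

namespace Stmt7Aux

noncomputable def cheb (τ : ℝ) : ℕ → ℝ
  | 0 => 0
  | 1 => 1
  | n + 2 => τ * cheb τ (n + 1) - cheb τ n

lemma cheb_zero (τ : ℝ) : cheb τ 0 = 0 := rfl
lemma cheb_one (τ : ℝ) : cheb τ 1 = 1 := rfl
lemma cheb_succ_succ (τ : ℝ) (n : ℕ) :
    cheb τ (n + 1 + 1) = τ * cheb τ (n + 1) - cheb τ n := rfl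
lemma cheb_two (τ : ℝ) : cheb τ 2 = τ := by
  have h : cheb τ (0 + 1 + 1) = τ * cheb τ (0 + 1) - cheb τ 0 := cheb_succ_succ τ 0
  simpa [cheb_zero, cheb_one] using h

lemma cheb_sin (φ : ℝ) (n : ℕ) :
    cheb (2 * Real.cos φ) n * Real.sin φ = Real.sin (n * φ) := by
  induction n using Nat.twoStepInduction with
  | zero => simp [cheb_zero]
  | one => simp [cheb_one]
  | more n ih1 ih2 =>
      have h1 : ((n + 2 : ℕ) : ℝ) * φ = ((n + 1 : ℕ) : ℝ) * φ + φ := by push_cast; ring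
      have h2 : ((n : ℕ) : ℝ) * φ = ((n + 1 : ℕ) : ℝ) * φ - φ := by push_cast; ring
      rw [show (n + 2 : ℕ) = n + 1 + 1 from rfl, cheb_succ_succ]
      rw [show ((n+1+1 : ℕ) : ℝ) = ((n+2 : ℕ) : ℝ) from by push_cast; ring, h1, Real.sin_add]
      rw [h2, Real.sin_sub] at ih1
      linear_combination 2 * Real.cos φ * ih2 - ih1

lemma cheb_growth (τ : ℝ) (hτ : 2 ≤ τ) (n : ℕ) :
    0 ≤ cheb τ n ∧ cheb τ n + 1 ≤ cheb τ (n + 1) := by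
  induction n with
  | zero => simp [cheb_zero, cheb_one]
  | succ n ih =>
      obtain ⟨h1, h2⟩ := ih
      refine ⟨by linarith, ?_⟩
      rw [cheb_succ_succ]
      nlinarith

variable {V : Type*} [AddCommGroup V] [Module ℝ V]

lemma key (x y : V) (F G : V →ₗ[ℝ] ℝ) (r s : Module.End ℝ V) (a b : ℝ)
    (hr : ∀ z, r z = z - F z • x) (hs : ∀ z, s z = z - G z • y)
    (hFx : F x = 2) (hGy : G y = 2) (hFy : F y = 2 * b) (hGx : G x = 2 * a) (n : ℕ) :
    ((r * s) ^ (n + 1)) x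
        = ((4 * (a * b) - 1) * cheb (4 * (a * b) - 2) (n + 1)
            - cheb (4 * (a * b) - 2) n) • x
          + (-(2 * a) * cheb (4 * (a * b) - 2) (n + 1)) • y
      ∧ ((r * s) ^ (n + 1)) y
        = (2 * b * cheb (4 * (a * b) - 2) (n + 1)) • x
          + (-(cheb (4 * (a * b) - 2) (n + 1) + cheb (4 * (a * b) - 2) n)) • y := by
  have hx1 : (r * s) x = (4 * (a * b) - 1) • x + (-(2 * a)) • y := by
    simp only [Module.End.mul_apply, hs, hr, map_sub, map_smul, hFx, hGx, hFy, hGy,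
      smul_eq_mul]
    match_scalars <;> ring
  have hy1 : (r * s) y = (2 * b) • x + (-1 : ℝ) • y := by
    simp only [Module.End.mul_apply, hs, hr, map_sub, map_smul, hFx, hGx, hFy, hGy,
      smul_eq_mul]
    match_scalars <;> ring
  induction n with
  | zero =>
      simp only [zero_add, pow_one, cheb_zero, cheb_one]
      refine ⟨?_, ?_⟩
      · rw [hx1]; match_scalars <;> ring
      · rw [hy1]; match_scalars <;> ring
  | succ n ih =>
      obtain ⟨ihx, ihy⟩ := ih
      constructor
      · rw [pow_succ', Module.End.mul_apply, ihx, map_add, map_smul, map_smul, hx1, hy1,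
          cheb_succ_succ]
        match_scalars <;> ring
      · rw [pow_succ', Module.End.mul_apply, ihy, map_add, map_smul, map_smul, hx1, hy1,
          cheb_succ_succ]
        match_scalars <;> ring

lemma extract {x y : V} (indep : LinearIndependent ℝ ![x, y]) {c₁ c₂ d₁ d₂ : ℝ}
    (h : c₁ • x + c₂ • y = d₁ • x + d₂ • y) : c₁ = d₁ ∧ c₂ = d₂ := by
  have h0 : (c₁ - d₁) • x + (c₂ - d₂) • y = 0 := by
    linear_combination (norm := module) h
  have := LinearIndependent.pair_iff.mp indep _ _ h0
  constructor <;> [linarith [this.1]; linarith [this.2]]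

lemma core_infinite (x y : V) (F G : V →ₗ[ℝ] ℝ) (r s : Module.End ℝ V) (a b : ℝ)
    (hr : ∀ z, r z = z - F z • x) (hs : ∀ z, s z = z - G z • y)
    (hFx : F x = 2) (hGy : G y = 2) (hFy : F y = 2 * b) (hGx : G x = 2 * a)
    (indep : LinearIndependent ℝ ![x, y]) (hc : 1 ≤ a * b) (ha : a ≤ 0) :
    ¬ IsOfFinOrder (r * s) := by
  intro hfin
  obtain ⟨n, hn, hpow⟩ := isOfFinOrder_iff_pow_eq_one.mp hfin
  obtain ⟨N, rfl⟩ : ∃ N, n = N + 1 := ⟨n - 1, by omega⟩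
  have hx : ((r * s) ^ (N + 1)) x = x := by rw [hpow]; rfl
  rw [(key x y F G r s a b hr hs hFx hGy hFy hGx N).1] at hx
  have hx' : ((4 * (a * b) - 1) * cheb (4 * (a * b) - 2) (N + 1)
      - cheb (4 * (a * b) - 2) N) • x
      + (-(2 * a) * cheb (4 * (a * b) - 2) (N + 1)) • y
      = (1 : ℝ) • x + (0 : ℝ) • y := by rw [hx]; module
  have h2 := (extract indep hx').2
  have ha' : a < 0 := by
    rcases lt_or_eq_of_le ha with h | h
    · exact h
    · exfalso; rw [h, zero_mul] at hc; linarith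
  have hg := cheb_growth (4 * (a * b) - 2) (by nlinarith) N
  have : 0 < cheb (4 * (a * b) - 2) (N + 1) := by linarith [hg.1, hg.2]
  nlinarith


set_option maxHeartbeats 2000000 in
lemma core_finite (x y : V) (F G : V →ₗ[ℝ] ℝ) (r s : Module.End ℝ V) (a b : ℝ)
    (hr : ∀ z, r z = z - F z • x) (hs : ∀ z, s z = z - G z • y)
    (hFx : F x = 2) (hGy : G y = 2) (hFy : F y = 2 * b) (hGx : G x = 2 * a)
    (indep : LinearIndependent ℝ ![x, y])
    (m : ℕ) (hm : 2 ≤ m) (hc : a * b = Real.cos (Real.pi / m) ^ 2)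
    (hiff : a = 0 ↔ b = 0) :
    orderOf (r * s) = m := by
  have hπ := Real.pi_pos
  have hkey := key x y F G r s a b hr hs hFx hGy hFy hGx
  set τ : ℝ := 4 * (a * b) - 2 with hτdef
  have hm2R : (2:ℝ) ≤ (m:ℝ) := by exact_mod_cast hm
  have hmR0 : (0:ℝ) < (m:ℝ) := by linarith
  have hmain : ((4 * (a * b) - 1) * cheb τ m - cheb τ (m - 1) = 1
      ∧ a * cheb τ m = 0 ∧ b * cheb τ m = 0
      ∧ cheb τ m + cheb τ (m - 1) = -1)
      ∧ ∀ K : ℕ, K + 1 < m →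
        ¬ ((4 * (a * b) - 1) * cheb τ (K + 1) - cheb τ K = 1
            ∧ -(2 * a) * cheb τ (K + 1) = 0
            ∧ -(cheb τ (K + 1) + cheb τ K) = 1) := by
    rcases eq_or_lt_of_le hm with h2 | h3
    · -- m = 2
      have hab : a * b = 0 := by
        rw [hc, ← h2]
        norm_num [Real.cos_pi_div_two]
      have ha0 : a = 0 ∧ b = 0 := by
        rcases mul_eq_zero.mp hab with h | h
        · exact ⟨h, hiff.mp h⟩
        · exact ⟨hiff.mpr h, h⟩
      have hτ2 : τ = -2 := by rw [hτdef, hab]; ring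
      constructor
      · rw [← h2]
        norm_num [cheb_two, cheb_one, hτ2, ha0.1, ha0.2, hab]
      · intro K hK
        have hK0 : K = 0 := by omega
        subst hK0
        rw [cheb_one, cheb_zero]
        rintro ⟨-, -, h⟩
        norm_num at h
    · -- 3 ≤ m
      have hm3R : (2:ℝ) < (m:ℝ) := by exact_mod_cast h3
      set φ : ℝ := 2 * Real.pi / m with hφdef
      have hφ0 : 0 < φ := by positivity
      have hφπ : φ < Real.pi := by
        rw [hφdef, div_lt_iff₀ hmR0]
        nlinarith
      have hsin : 0 < Real.sin φ := Real.sin_pos_of_pos_of_lt_pi hφ0 hφπ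
      have hτφ : τ = 2 * Real.cos φ := by
        rw [hτdef, hc, show φ = 2 * (Real.pi / m) from by rw [hφdef]; ring,
          Real.cos_two_mul]
        ring
      have hchm : cheb τ m = 0 := by
        have h := cheb_sin φ m
        rw [← hτφ, show (m:ℝ) * φ = 2 * Real.pi from by
          rw [hφdef]; field_simp, Real.sin_two_pi] at h
        exact (mul_eq_zero.mp h).resolve_right hsin.ne'
      have hcast : ((m - 1 : ℕ) : ℝ) = (m : ℝ) - 1 := by
        have h1 : 1 ≤ m := by omega
        push_cast [h1]
        ring
      have hchm1 : cheb τ (m - 1) = -1 := by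
        have h := cheb_sin φ (m - 1)
        rw [← hτφ, hcast, show ((m:ℝ) - 1) * φ = 2 * Real.pi - φ from by
          rw [hφdef]; field_simp, Real.sin_two_pi_sub] at h
        have h' : (cheb τ (m - 1) + 1) * Real.sin φ = 0 := by linear_combination h
        rcases mul_eq_zero.mp h' with h'' | h''
        · linarith
        · exact absurd h'' hsin.ne'
      refine ⟨⟨by rw [hchm, hchm1]; ring, by rw [hchm]; ring, by rw [hchm]; ring,
        by rw [hchm, hchm1]; ring⟩, ?_⟩
      intro K hK hcon
      obtain ⟨e1, e2, e3⟩ := hcon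
      have hcos : 0 < Real.cos (Real.pi / m) := by
        apply Real.cos_pos_of_mem_Ioo
        constructor
        · have : 0 < Real.pi / m := by positivity
          linarith
        · rw [div_lt_div_iff₀ hmR0 (by norm_num : (0:ℝ) < 2)]
          nlinarith
      have hab : 0 < a * b := by rw [hc]; positivity
      have ha : a ≠ 0 := by
        intro h
        rw [h, zero_mul] at hab
        linarith
      have hch0 : cheb τ (K + 1) = 0 := by
        rcases mul_eq_zero.mp e2 with h | h
        · exact absurd (by linarith [h] : a = 0) ha
        · exact h
      have hsK : Real.sin (((K + 1 : ℕ) : ℝ) * φ) = 0 := by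
        have h := cheb_sin φ (K + 1)
        rw [← hτφ, hch0, zero_mul] at h
        exact h.symm
      obtain ⟨j, hj⟩ := Real.sin_eq_zero_iff.mp hsK
      have hKφpos : 0 < ((K + 1 : ℕ) : ℝ) * φ := by positivity
      have hKcast : ((K + 1 : ℕ) : ℝ) < (m:ℝ) := by exact_mod_cast hK
      have hKφlt : ((K + 1 : ℕ) : ℝ) * φ < 2 * Real.pi := by
        rw [hφdef]
        rw [mul_div_assoc', div_lt_iff₀ hmR0]
        nlinarith
      have hj1 : j = 1 := by
        have h0 : (0:ℝ) < (j:ℝ) * Real.pi := by rw [hj]; exact hKφpos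
        have h2 : (j:ℝ) * Real.pi < 2 * Real.pi := by rw [hj]; exact hKφlt
        have hj0 : (0:ℝ) < (j:ℝ) := lt_of_mul_lt_mul_right (by linarith : (0:ℝ) * Real.pi < (j:ℝ) * Real.pi) hπ.le
        have hj2 : (j:ℝ) < 2 := lt_of_mul_lt_mul_right (by linarith) hπ.le
        have : (0:ℤ) < j := by exact_mod_cast hj0
        have : (j:ℤ) < 2 := by exact_mod_cast hj2
        omega
      have hKφ : ((K + 1 : ℕ) : ℝ) * φ = Real.pi := by
        rw [← hj, hj1, Int.cast_one, one_mul]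
      have hsK' : Real.sin (((K : ℕ) : ℝ) * φ) = Real.sin φ := by
        have hKK : ((K : ℕ) : ℝ) * φ = Real.pi - φ := by
          push_cast at hKφ
          nlinarith [hKφ]
        rw [hKK, Real.sin_pi_sub]
      have hchK : cheb τ K = 1 := by
        have h := cheb_sin φ K
        rw [← hτφ, hsK'] at h
        have := mul_right_cancel₀ hsin.ne' (h.trans (one_mul (Real.sin φ)).symm)
        exact this
      rw [hch0, hchK] at e1
      norm_num at e1
  -- the identity (r*s)^m = 1
  have hm1 : m - 1 + 1 = m := by omega
  have hkx : ((r * s) ^ m) x = x := by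
    have h := (hkey (m - 1)).1
    rw [hm1] at h
    have e2 : -(2 * a) * cheb τ m = 0 := by linear_combination (-2) * hmain.1.2.1
    rw [h, hmain.1.1, e2, one_smul, zero_smul, add_zero]
  have hky : ((r * s) ^ m) y = y := by
    have h := (hkey (m - 1)).2
    rw [hm1] at h
    have e1 : 2 * b * cheb τ m = 0 := by linear_combination 2 * hmain.1.2.2.1
    have e2 : -(cheb τ m + cheb τ (m - 1)) = 1 := by
      rw [hmain.1.2.2.2]; ring
    rw [h, e1, e2, one_smul, zero_smul, zero_add]
  have hab1 : a * b < 1 := by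
    rw [hc]
    have h1 : Real.cos (Real.pi / m) ≤ 1 := Real.cos_le_one _
    have h2 : -1 ≤ Real.cos (Real.pi / m) := Real.neg_one_le_cos _
    have hd0 : 0 < Real.pi / m := by positivity
    have hple : Real.pi / m ≤ Real.pi / 2 :=
      div_le_div_of_nonneg_left hπ.le (by norm_num) hm2R
    have h3 : Real.cos (Real.pi / m) ≠ 1 := by
      intro h
      have h4 := (Real.cos_eq_one_iff_of_lt_of_lt
        (x := Real.pi / m) (by linarith) (by linarith)).mp h
      linarith
    have h5 : Real.cos (Real.pi / m) < 1 := lt_of_le_of_ne h1 h3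
    have hnn : 0 ≤ Real.cos (Real.pi / m) :=
      Real.cos_nonneg_of_mem_Icc ⟨by linarith, hple⟩
    nlinarith
  have hone : (r * s) ^ m = 1 := by
    have hd : (0:ℝ) < 2 * (1 - a * b) := by linarith
    apply LinearMap.ext
    intro z
    set lam : ℝ := (F z - b * G z) / (2 * (1 - a * b)) with hlam
    set mu : ℝ := (G z - a * F z) / (2 * (1 - a * b)) with hmu
    set z₀ : V := z - lam • x - mu • y with hz₀
    have hF0 : F z₀ = 0 := by
      rw [hz₀, map_sub, map_sub, map_smul, map_smul, hFx, hFy, hlam, hmu,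
        smul_eq_mul, smul_eq_mul]
      have hinv : (2 * (1 - a * b)) * (2 * (1 - a * b))⁻¹ = 1 := mul_inv_cancel₀ hd.ne'
      linear_combination (-(F z)) * hinv
    have hG0 : G z₀ = 0 := by
      rw [hz₀, map_sub, map_sub, map_smul, map_smul, hGx, hGy, hlam, hmu,
        smul_eq_mul, smul_eq_mul]
      have hinv : (2 * (1 - a * b)) * (2 * (1 - a * b))⁻¹ = 1 := mul_inv_cancel₀ hd.ne'
      linear_combination (-(G z)) * hinv
    have hfix1 : (r * s) z₀ = z₀ := by
      rw [Module.End.mul_apply, hs, hG0, zero_smul, sub_zero, hr, hF0, zero_smul,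
        sub_zero]
    have hfix : ∀ k : ℕ, ((r * s) ^ k) z₀ = z₀ := by
      intro k
      induction k with
      | zero => simp
      | succ k ih => rw [pow_succ', Module.End.mul_apply, ih, hfix1]
    have hdecomp : z = lam • x + mu • y + z₀ := by rw [hz₀]; abel
    show ((r * s) ^ m) z = (1 : Module.End ℝ V) z
    rw [Module.End.one_apply]
    conv_lhs => rw [hdecomp]
    rw [map_add, map_add, map_smul, map_smul, hkx, hky, hfix m, ← hdecomp]
  rw [orderOf_eq_iff (by omega : 0 < m)]
  refine ⟨hone, ?_⟩
  intro k hkm hk0 hkone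
  obtain ⟨K, rfl⟩ : ∃ K, k = K + 1 := ⟨k - 1, by omega⟩
  have hxk : ((r * s) ^ (K + 1)) x = x := by rw [hkone]; rfl
  have hyk : ((r * s) ^ (K + 1)) y = y := by rw [hkone]; rfl
  rw [(hkey K).1] at hxk
  rw [(hkey K).2] at hyk
  have ex := extract indep (show _ = (1:ℝ) • x + (0:ℝ) • y by rw [hxk]; module)
  have ey := extract indep (show _ = (0:ℝ) • x + (1:ℝ) • y by rw [hyk]; module)
  exact hmain.2 K hkm ⟨ex.1, ex.2, ey.2⟩

lemma sum_two_single {v w : V} (hvw : v ≠ w) (c₁ c₂ : ℝ) :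
    (Finsupp.single v c₁ + Finsupp.single w c₂).sum (fun a t => t • a)
      = c₁ • v + c₂ • w := by
  rw [Finsupp.sum_add_index' (fun a => zero_smul ℝ a) (fun a t₁ t₂ => add_smul t₁ t₂ a),
    Finsupp.sum_single_index (zero_smul ℝ v), Finsupp.sum_single_index (zero_smul ℝ w)]

lemma plc_zero {S : Type*} (α : S → V) {s t : S} (hne : α s ≠ α t) {c₁ c₂ : ℝ}
    (h1 : 0 ≤ c₁) (h2 : 0 ≤ c₂) (hnz : c₁ ≠ 0 ∨ c₂ ≠ 0)
    (hsum : c₁ • α s + c₂ • α t = 0) : (0 : V) ∈ PLC (Set.range α) := by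
  classical
  refine ⟨Finsupp.single (α s) c₁ + Finsupp.single (α t) c₂, ?_, ?_, ?_, ?_⟩
  · intro v
    simp only [Finsupp.add_apply, Finsupp.single_apply]
    split_ifs <;> simp_all <;> linarith
  · refine subset_trans (Finset.coe_subset.mpr Finsupp.support_add) ?_
    rw [Finset.coe_union]
    apply Set.union_subset
    · exact subset_trans (Finset.coe_subset.mpr Finsupp.support_single_subset)
        (by simp [Set.range])
    · exact subset_trans (Finset.coe_subset.mpr Finsupp.support_single_subset)
        (by simp [Set.range])
  · intro h0
    rcases hnz with h | h
    · have := DFunLike.congr_fun h0 (α s)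
      simp [Finsupp.single_apply, hne, hne.symm] at this
      exact h this
    · have := DFunLike.congr_fun h0 (α t)
      simp [Finsupp.single_apply, hne, hne.symm] at this
      exact h this
  · rw [sum_two_single hne, hsum]

lemma plc_ratio {S : Type*} (α : S → V) {s t : S} (hst : α s ≠ α t) {c : ℝ}
    (hc : 0 < c) (h : α s = c • α t) : α s ∈ PLC (Set.range α \ {α s}) := by
  classical
  refine ⟨Finsupp.single (α t) c, ?_, ?_, ?_, ?_⟩
  · intro v
    simp only [Finsupp.single_apply]
    split_ifs <;> [linarith; rfl]
  · refine subset_trans (Finset.coe_subset.mpr Finsupp.support_single_subset) ?_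
    simp only [Finset.coe_singleton, Set.singleton_subset_iff, Set.mem_diff,
      Set.mem_range, Set.mem_singleton_iff]
    exact ⟨⟨t, rfl⟩, hst.symm⟩
  · intro h0
    have := DFunLike.congr_fun h0 (α t)
    simp [Finsupp.single_apply] at this
    exact hc.ne' this
  · rw [Finsupp.sum_single_index (zero_smul ℝ (α t)), h]

lemma pair_indep {S : Type*} (α : S → V) (hα : Function.Injective α)
    (D2a : (0 : V) ∉ PLC (Set.range α))
    (D2c : ∀ u, α u ∉ PLC (Set.range α \ {α u})) (s t : S) (hst : s ≠ t) :
    LinearIndependent ℝ ![α s, α t] := by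
  have hne : α s ≠ α t := fun h => hst (hα h)
  rw [LinearIndependent.pair_iff]
  intro c₁ c₂ hsum
  by_contra hcon
  rw [not_and_or] at hcon
  have hnz : c₁ ≠ 0 ∨ c₂ ≠ 0 := by tauto
  rcases le_or_gt 0 c₁ with h1 | h1 <;> rcases le_or_gt 0 c₂ with h2 | h2
  · exact D2a (plc_zero α hne h1 h2 hnz hsum)
  · -- c₁ ≥ 0, c₂ < 0 : α t = (c₁ / -c₂) • α s? No: c₁ • αs = -c₂ • αt
    -- αt = (c₁ / (-c₂)) • α s
    have hc₁ : 0 < c₁ := by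
      rcases lt_or_eq_of_le h1 with h | h
      · exact h
      · exfalso
        rw [← h, zero_smul, zero_add] at hsum
        rcases smul_eq_zero.mp hsum with h' | h'
        · exact h2.ne h'
        · exact D2a (plc_zero α hne le_rfl zero_le_one (Or.inr one_ne_zero)
            (by rw [h', zero_smul, smul_zero, add_zero]))
    have h' : c₁ • α s = (-c₂) • α t := by
      linear_combination (norm := module) hsum
    have heq : α s = (-c₂ / c₁) • α t := by
      rw [div_eq_inv_mul, ← smul_smul, ← h', inv_smul_smul₀ hc₁.ne']
    exact D2c s (plc_ratio α hne (div_pos (by linarith) hc₁) heq)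
  · have hc₂ : 0 < c₂ := by
      rcases lt_or_eq_of_le h2 with h | h
      · exact h
      · exfalso
        rw [← h, zero_smul, add_zero] at hsum
        rcases smul_eq_zero.mp hsum with h' | h'
        · exact h1.ne h'
        · exact D2a (plc_zero α hne zero_le_one le_rfl (Or.inl one_ne_zero)
            (by rw [h', smul_zero, zero_smul, add_zero]))
    have h' : c₂ • α t = (-c₁) • α s := by
      linear_combination (norm := module) hsum
    have heq : α t = (-c₁ / c₂) • α s := by
      rw [div_eq_inv_mul, ← smul_smul, ← h', inv_smul_smul₀ hc₂.ne']
    exact D2c t (plc_ratio (α := α) hne.symm (div_pos (by linarith) hc₂) heq)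
  · have : (-c₁) • α s + (-c₂) • α t = 0 := by
      rw [neg_smul, neg_smul, ← neg_add, hsum, neg_zero]
    exact D2a (plc_zero α hne (by linarith) (by linarith)
      (Or.inl (by intro h; linarith [neg_eq_zero.mp h])) this)

end Stmt7Aux

/-- Suppose (D1)–(D5) hold.  Then for each `i ∈ {1,2}` and all distinct
`s, t ∈ S`: if `⟨αₛ, βₜ⟩⟨αₜ, βₛ⟩ = cos²(π/m)` for an integer `m ≥ 2` then `ρᵢ(s) ρᵢ(t)`
has order exactly `m`, and if `⟨αₛ, βₜ⟩⟨αₜ, βₛ⟩ ≥ 1` then `ρᵢ(s) ρᵢ(t)` has infinite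
order (the order being computed in the multiplicative monoid of linear endomorphisms,
which contains `Wᵢ`). -/
theorem stmt7 {S V₁ V₂ : Type*} [AddCommGroup V₁] [Module ℝ V₁]
    [AddCommGroup V₂] [Module ℝ V₂]
    (pair : V₁ →ₗ[ℝ] V₂ →ₗ[ℝ] ℝ) (α : S → V₁) (β : S → V₂)
    (hα : Function.Injective α) (hβ : Function.Injective β)
    (D1 : ∀ s, pair (α s) (β s) = 1)
    (D2a : (0 : V₁) ∉ PLC (Set.range α)) (D2b : (0 : V₂) ∉ PLC (Set.range β))
    (D2c : ∀ s, α s ∉ PLC (Set.range α \ {α s}))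
    (D2d : ∀ s, β s ∉ PLC (Set.range β \ {β s}))
    (D3 : ∀ s t : S, s ≠ t → pair (α s) (β t) ≤ 0 ∧ pair (α t) (β s) ≤ 0)
    (D4 : ∀ s t : S, pair (α s) (β t) = 0 ↔ pair (α t) (β s) = 0)
    (D5 : ∀ s t : S, s ≠ t →
      (∃ m : ℕ, 2 ≤ m ∧
          pair (α s) (β t) * pair (α t) (β s) = Real.cos (Real.pi / m) ^ 2) ∨
        1 ≤ pair (α s) (β t) * pair (α t) (β s))
    (ρ₁ : S → Module.End ℝ V₁) (ρ₂ : S → Module.End ℝ V₂)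
    (hρ₁ : ∀ s x, ρ₁ s x = x - (2 * pair x (β s)) • α s)
    (hρ₂ : ∀ s y, ρ₂ s y = y - (2 * pair (α s) y) • β s) :
    ∀ s t : S, s ≠ t →
      (∀ m : ℕ, 2 ≤ m →
        pair (α s) (β t) * pair (α t) (β s) = Real.cos (Real.pi / m) ^ 2 →
          orderOf (ρ₁ s * ρ₁ t) = m ∧ orderOf (ρ₂ s * ρ₂ t) = m) ∧
      (1 ≤ pair (α s) (β t) * pair (α t) (β s) →
        ¬ IsOfFinOrder (ρ₁ s * ρ₁ t) ∧ ¬ IsOfFinOrder (ρ₂ s * ρ₂ t)) := by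
  intro s t hst
  have indepα := Stmt7Aux.pair_indep α hα D2a D2c s t hst
  have indepβ := Stmt7Aux.pair_indep β hβ D2b D2d s t hst
  have hr1 : ∀ z, ρ₁ s z = z - (((2:ℝ) • pair.flip (β s)) z) • α s := by
    intro z
    simp [hρ₁, LinearMap.smul_apply, LinearMap.flip_apply, smul_eq_mul]
  have hs1 : ∀ z, ρ₁ t z = z - (((2:ℝ) • pair.flip (β t)) z) • α t := by
    intro z
    simp [hρ₁, LinearMap.smul_apply, LinearMap.flip_apply, smul_eq_mul]
  have hr2 : ∀ z, ρ₂ s z = z - (((2:ℝ) • pair (α s)) z) • β s := by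
    intro z
    simp [hρ₂, LinearMap.smul_apply, smul_eq_mul]
  have hs2 : ∀ z, ρ₂ t z = z - (((2:ℝ) • pair (α t)) z) • β t := by
    intro z
    simp [hρ₂, LinearMap.smul_apply, smul_eq_mul]
  have hFx1 : ((2:ℝ) • pair.flip (β s)) (α s) = 2 := by
    simp [LinearMap.smul_apply, LinearMap.flip_apply, smul_eq_mul, D1 s]
  have hGy1 : ((2:ℝ) • pair.flip (β t)) (α t) = 2 := by
    simp [LinearMap.smul_apply, LinearMap.flip_apply, smul_eq_mul, D1 t]
  have hFy1 : ((2:ℝ) • pair.flip (β s)) (α t) = 2 * pair (α t) (β s) := by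
    simp [LinearMap.smul_apply, LinearMap.flip_apply, smul_eq_mul]
  have hGx1 : ((2:ℝ) • pair.flip (β t)) (α s) = 2 * pair (α s) (β t) := by
    simp [LinearMap.smul_apply, LinearMap.flip_apply, smul_eq_mul]
  have hFx2 : ((2:ℝ) • pair (α s)) (β s) = 2 := by
    simp [LinearMap.smul_apply, smul_eq_mul, D1 s]
  have hGy2 : ((2:ℝ) • pair (α t)) (β t) = 2 := by
    simp [LinearMap.smul_apply, smul_eq_mul, D1 t]
  have hFy2 : ((2:ℝ) • pair (α s)) (β t) = 2 * pair (α s) (β t) := by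
    simp [LinearMap.smul_apply, smul_eq_mul]
  have hGx2 : ((2:ℝ) • pair (α t)) (β s) = 2 * pair (α t) (β s) := by
    simp [LinearMap.smul_apply, smul_eq_mul]
  constructor
  · intro m hm hcm
    constructor
    · exact Stmt7Aux.core_finite (α s) (α t) ((2:ℝ) • pair.flip (β s))
        ((2:ℝ) • pair.flip (β t)) (ρ₁ s) (ρ₁ t)
        (pair (α s) (β t)) (pair (α t) (β s))
        hr1 hs1 hFx1 hGy1 hFy1 hGx1 indepα m hm hcm (D4 s t)
    · exact Stmt7Aux.core_finite (β s) (β t) ((2:ℝ) • pair (α s))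
        ((2:ℝ) • pair (α t)) (ρ₂ s) (ρ₂ t)
        (pair (α t) (β s)) (pair (α s) (β t))
        hr2 hs2 hFx2 hGy2 hFy2 hGx2 indepβ m hm
        (by rw [mul_comm]; exact hcm) (D4 s t).symm
  · intro h1
    constructor
    · exact Stmt7Aux.core_infinite (α s) (α t) ((2:ℝ) • pair.flip (β s))
        ((2:ℝ) • pair.flip (β t)) (ρ₁ s) (ρ₁ t)
        (pair (α s) (β t)) (pair (α t) (β s))
        hr1 hs1 hFx1 hGy1 hFy1 hGx1 indepα h1 (D3 s t hst).1
    · exact Stmt7Aux.core_infinite (β s) (β t) ((2:ℝ) • pair (α s))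
        ((2:ℝ) • pair (α t)) (ρ₂ s) (ρ₂ t)
        (pair (α t) (β s)) (pair (α s) (β t))
        hr2 hs2 hFx2 hGy2 hFy2 hGx2 indepβ
        (by rw [mul_comm]; exact h1) (D3 s t hst).2
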